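/- Discrete needle-like variation derivative: let f : ℝⁿ × ℝ^m × ℕ → ℝⁿ be C¹ in (q,u), fix a control u, an initial state q₀, a time r ∈ {0,...,b−1}, and a direction y ∈ ℝ^m. For α ∈ [0,1] define the perturbed control u_α by u_α(r) = u(r) + α(y − u(r)) and u_α(t) = u(t) for t ≠ r, and let q_α be the trajectory q_α(t+1) = q_α(t) + f(q_α(t),u_α(t),t), q_α(0) = q₀. Then for each t ∈ {r+1,...,b}, the map α ↦ q_α(t) is differentiable at α = 0 and its derivative is w(t), where w satisfies w(r+1) = (∂f/∂u)(q₀*(r),u(r),r)·(y − u(r)) (with q₀* = q_0 the unperturbed trajectory) and w(t+1) = w(t) + (∂f/∂q)(q₀*(t),u(t),t)·w(t) for t ≥ r+1. -/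

import Mathlib

/-- Discrete trajectory: q(t+1) = q(t) + f(q(t), u(t), t), q(0) = q₀. -/
def traj18 {n m : ℕ}
    (f : EuclideanSpace ℝ (Fin n) → EuclideanSpace ℝ (Fin m) → ℕ → EuclideanSpace ℝ (Fin n))
    (u : ℕ → EuclideanSpace ℝ (Fin m)) (q₀ : EuclideanSpace ℝ (Fin n)) :
    ℕ → EuclideanSpace ℝ (Fin n)
  | 0 => q₀
  | t + 1 => traj18 f u q₀ t + f (traj18 f u q₀ t) (u t) t

theorem stmt18 {n m b : ℕ} (hn : 0 < n) (hm : 0 < m)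
    (f : EuclideanSpace ℝ (Fin n) → EuclideanSpace ℝ (Fin m) → ℕ → EuclideanSpace ℝ (Fin n))
    (hf : ∀ t, ContDiff ℝ 1 fun p : EuclideanSpace ℝ (Fin n) × EuclideanSpace ℝ (Fin m) =>
      f p.1 p.2 t)
    (u : ℕ → EuclideanSpace ℝ (Fin m)) (q₀ : EuclideanSpace ℝ (Fin n))
    (r : ℕ) (hr : r < b) (y : EuclideanSpace ℝ (Fin m))
    -- the perturbed control u_α
    (uvar : ℝ → ℕ → EuclideanSpace ℝ (Fin m))
    (huvar : ∀ α t, uvar α t = if t = r then u r + α • (y - u r) else u t)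
    -- the variation vector w
    (w : ℕ → EuclideanSpace ℝ (Fin n))
    (hw1 : w (r + 1) = fderiv ℝ (fun v => f (traj18 f u q₀ r) v r) (u r) (y - u r))
    (hw2 : ∀ t, r + 1 ≤ t →
      w (t + 1) = w t + fderiv ℝ (fun x => f x (u t) t) (traj18 f u q₀ t) (w t)) :
    ∀ t, r + 1 ≤ t → t ≤ b →
      HasDerivAt (fun α : ℝ => traj18 f (uvar α) q₀ t) (w t) 0 := by
  classical
  have huv0 : uvar 0 = u := by
    funext t; rw [huvar]; split_ifs with h
    · subst h; simp
    · rfl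
  have hconst : ∀ α, ∀ s, s ≤ r → traj18 f (uvar α) q₀ s = traj18 f u q₀ s := by
    intro α s hs
    induction s with
    | zero => rfl
    | succ k ih =>
      have hk : k < r := hs
      have hu : uvar α k = u k := by rw [huvar]; simp [Nat.ne_of_lt hk]
      simp only [traj18, ih hk.le, hu]
  set F : ℕ → (EuclideanSpace ℝ (Fin n) × EuclideanSpace ℝ (Fin m)) → EuclideanSpace ℝ (Fin n) :=
    fun t p => f p.1 p.2 t with hF
  have hFd : ∀ t p, HasFDerivAt (F t) (fderiv ℝ (F t) p) p := fun t p =>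
    ((hf t).differentiable one_ne_zero p).hasFDerivAt
  have hpart1 : ∀ t q c (v : EuclideanSpace ℝ (Fin n)),
      fderiv ℝ (fun x => f x c t) q v = fderiv ℝ (F t) (q, c) (v, 0) := by
    intro t q c v
    have h := ((hFd t (q, c)).comp q (hasFDerivAt_prodMk_left (𝕜 := ℝ) q c)).fderiv
    have : fderiv ℝ (fun x => f x c t) q =
        (fderiv ℝ (F t) (q, c)).comp (ContinuousLinearMap.inl ℝ _ _) := h
    rw [this]; rfl
  have hpart2 : ∀ t q c (v : EuclideanSpace ℝ (Fin m)),
      fderiv ℝ (fun x => f q x t) c v = fderiv ℝ (F t) (q, c) (0, v) := by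
    intro t q c v
    have h := ((hFd t (q, c)).comp c (hasFDerivAt_prodMk_right (𝕜 := ℝ) q c)).fderiv
    have : fderiv ℝ (fun x => f q x t) c =
        (fderiv ℝ (F t) (q, c)).comp (ContinuousLinearMap.inr ℝ _ _) := h
    rw [this]; rfl
  intro t ht
  induction t, ht using Nat.le_induction with
  | base =>
    intro _
    have heq : (fun α : ℝ => traj18 f (uvar α) q₀ (r + 1)) =
        fun α : ℝ => traj18 f u q₀ r +
          F r (traj18 f u q₀ r, u r + α • (y - u r)) := by
      funext α
      have hu : uvar α r = u r + α • (y - u r) := by rw [huvar]; simp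
      simp only [traj18, hconst α r le_rfl, hu, hF]
    rw [heq]
    have hinner : HasDerivAt (fun α : ℝ => (traj18 f u q₀ r, u r + α • (y - u r)))
        ((0 : EuclideanSpace ℝ (Fin n)), y - u r) 0 := by
      apply HasDerivAt.prodMk (hasDerivAt_const _ _)
      have := ((hasDerivAt_id (0 : ℝ)).smul_const (y - u r)).const_add (u r)
      simpa using this
    have hcomp := (hFd r _).comp_hasDerivAt 0 hinner
    have := hcomp.const_add (traj18 f u q₀ r)
    have hwv : w (r + 1) = fderiv ℝ (F r) (traj18 f u q₀ r, u r) (0, y - u r) := by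
      rw [hw1, hpart2]
    rw [hwv]
    simpa using this
  | succ t htr ih =>
    intro htb
    have ihQ := ih (le_of_lt htb)
    have heq : (fun α : ℝ => traj18 f (uvar α) q₀ (t + 1)) =
        fun α : ℝ => traj18 f (uvar α) q₀ t +
          F t (traj18 f (uvar α) q₀ t, u t) := by
      funext α
      have hu : uvar α t = u t := by
        rw [huvar]; simp [Nat.ne_of_gt (Nat.lt_of_lt_of_le (Nat.lt_succ_self r) htr)]
      simp only [traj18, hu, hF]
    rw [heq]
    have hQ0 : traj18 f (uvar 0) q₀ t = traj18 f u q₀ t := by rw [huv0]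
    have hinner : HasDerivAt (fun α : ℝ => (traj18 f (uvar α) q₀ t, u t))
        (w t, (0 : EuclideanSpace ℝ (Fin m))) 0 :=
      ihQ.prodMk (hasDerivAt_const _ _)
    have hcomp := (hFd t _).comp_hasDerivAt 0 hinner
    have := ihQ.add hcomp
    have hwv : w (t + 1) = w t + fderiv ℝ (F t) (traj18 f u q₀ t, u t) (w t, 0) := by
      rw [hw2 t htr, hpart1]
    rw [hwv]
    simpa [hQ0, Pi.add_def, Function.comp_def] using this
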